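/- Let D be a ring with center C, σ ∈ Aut(D) with σ|_C of finite order m, S_0 = C ∩ Fix(σ), and suppose C/S_0 is a cyclic Galois ring extension of degree m with Galois group generated by σ|_C. For any d ∈ D^×, the centralizer of C in the (possibly nonassociative) algebra (D,σ,d) = D[t;σ]/D[t;σ](t^m − d) is exactly D. -/
import Mathlib


open Finset

/-- The multiplication of the Petit algebra `(D,σ,d) = D[t;σ]/D[t;σ](t^m − d)` on
coefficient vectors `Fin m → D`. -/
def pmul {D : Type*} [Ring D] (σ : D ≃+* D) (d : D) (m : ℕ) (a b : Fin m → D) :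
    Fin m → D := fun k =>
  ∑ i : Fin m, ∑ j : Fin m,
    if (i : ℕ) + j = k then a i * (σ ^ (i : ℕ)) (b j)
    else if (i : ℕ) + j = (k : ℕ) + m then a i * (σ ^ (i : ℕ)) (b j) * (σ ^ (k : ℕ)) d
    else 0

/-- `C/S₀` is a cyclic Galois extension of degree `m` with group `⟨σ|_C⟩`, where `C` is the
center of `D` (Chase–Harrison–Rosenberg Galois coordinates). -/
def CenterCyclicGalois {D : Type*} [Ring D] (σ : D ≃+* D) (m : ℕ) : Prop :=
  0 < m ∧ (∀ c ∈ Subring.center D, (σ ^ m) c = c) ∧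
    ∀ j < m, ∃ (n : ℕ) (x y : Fin n → D),
      (∀ l, x l ∈ Subring.center D ∧ y l ∈ Subring.center D) ∧
      ∀ i < m, (∑ l, x l * (σ ^ i) (y l)) = if i = j then 1 else 0

/-- Multiplying `a` on the right by the degree-0 element `c` multiplies each coefficient
on the right by `σ^k c`. -/
lemma pmul_single_right {D : Type*} [Ring D] (σ : D ≃+* D) (d : D) (m : ℕ)
    (hm : 0 < m) (a : Fin m → D) (c : D) (k : Fin m) :
    pmul σ d m a (Pi.single (⟨0, hm⟩ : Fin m) c) k = a k * (σ ^ (k : ℕ)) c := by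
  unfold pmul
  rw [Finset.sum_comm]
  rw [Fintype.sum_eq_single (⟨0, hm⟩ : Fin m) (fun j hj => ?_)]
  · simp only [Pi.single_eq_same]
    rw [Fintype.sum_eq_single k (fun i hi => ?_)]
    · have h1 : (k : ℕ) + (⟨0, hm⟩ : Fin m) = (k : ℕ) := by simp
      simp [h1]
    · have h1 : (i : ℕ) ≠ (k : ℕ) := fun h => hi (Fin.ext h)
      have h2 : (i : ℕ) ≠ (k : ℕ) + m := by omega
      simp [h1, h2]
  · simp [Pi.single_eq_of_ne hj]

/-- Multiplying `a` on the left by the degree-0 element `c` multiplies each coefficient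
on the left by `c`. -/
lemma pmul_single_left {D : Type*} [Ring D] (σ : D ≃+* D) (d : D) (m : ℕ)
    (hm : 0 < m) (a : Fin m → D) (c : D) (k : Fin m) :
    pmul σ d m (Pi.single (⟨0, hm⟩ : Fin m) c) a k = c * a k := by
  unfold pmul
  rw [Fintype.sum_eq_single (⟨0, hm⟩ : Fin m) (fun i hi => ?_)]
  · simp only [Pi.single_eq_same, Fin.val_mk, pow_zero, Nat.zero_add]
    rw [Fintype.sum_eq_single k (fun j hj => ?_)]
    · rw [if_pos rfl]; rfl
    · have h1 : (j : ℕ) ≠ (k : ℕ) := fun h => hj (Fin.ext h)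
      have h2 : (j : ℕ) ≠ (k : ℕ) + m := by omega
      simp [h1, h2]
  · simp [Pi.single_eq_of_ne hi]

/-- Let `D` be a ring with center `C`, `σ ∈ Aut(D)` with `σ|_C` of finite order
`m`, and `C/S₀` cyclic Galois of degree `m` with group `⟨σ|_C⟩`.  For any unit `d ∈ Dˣ`, the
centralizer of `C` in `(D,σ,d) = D[t;σ]/D[t;σ](t^m − d)` is exactly `D`: an element
`a = ∑ aᵢ tⁱ` commutes with every `c ∈ C` iff all its coefficients of positive degree
vanish. -/
theorem centralizer_of_center_in_petit {D : Type*} [Ring D]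
    (σ : D ≃+* D) (m : ℕ) (hGal : CenterCyclicGalois σ m)
    (d : D) (hd : IsUnit d) :
    ∀ a : Fin m → D,
      (∀ c ∈ Subring.center D,
        pmul σ d m a (Pi.single (⟨0, hGal.1⟩ : Fin m) c) =
          pmul σ d m (Pi.single (⟨0, hGal.1⟩ : Fin m) c) a)
      ↔ ∀ i : Fin m, (i : ℕ) ≠ 0 → a i = 0 := by
  have hm := hGal.1
  intro a
  constructor
  · intro hcomm i hi
    have key : ∀ c ∈ Subring.center D, a i * (σ ^ (i : ℕ)) c = a i * c := by
      intro c hc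
      have h := congrFun (hcomm c hc) i
      rw [pmul_single_right σ d m hGal.1 a c i, pmul_single_left σ d m hGal.1 a c i] at h
      rw [h, (Subring.mem_center_iff.mp hc (a i)).symm]
    obtain ⟨n, x, y, hxy, hsum⟩ := hGal.2.2 0 hm
    have hsum0 : ∑ l, x l * y l = 1 := by simpa using hsum 0 hm
    have hsumi : ∑ l, x l * (σ ^ (i : ℕ)) (y l) = 0 := by
      rw [hsum (i : ℕ) i.isLt, if_neg hi]
    calc a i = a i * ∑ l, x l * y l := by rw [hsum0, mul_one]
      _ = ∑ l, x l * (a i * (σ ^ (i : ℕ)) (y l)) := by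
          rw [Finset.mul_sum]
          refine Finset.sum_congr rfl fun l _ => ?_
          rw [key (y l) (hxy l).2, ← mul_assoc, ← mul_assoc,
            Subring.mem_center_iff.mp (hxy l).1 (a i)]
      _ = a i * ∑ l, x l * (σ ^ (i : ℕ)) (y l) := by
          rw [Finset.mul_sum]
          refine Finset.sum_congr rfl fun l _ => ?_
          rw [← mul_assoc, ← mul_assoc, Subring.mem_center_iff.mp (hxy l).1 (a i)]
      _ = 0 := by rw [hsumi, mul_zero]
  · intro hz c hc
    funext k
    rw [pmul_single_right σ d m hGal.1 a c k, pmul_single_left σ d m hGal.1 a c k]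
    by_cases hk : (k : ℕ) = 0
    · have h0 : (σ ^ (k : ℕ)) c = c := by rw [hk, pow_zero]; rfl
      rw [h0]
      exact Subring.mem_center_iff.mp hc (a k)
    · rw [hz k hk]
      simp
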